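/- Trust-region worst-case update bound (Lemma A.1, operational form): in a finite discounted MDP, let δ > 0, let F : S → A → ℝ be a signal, and let π, π' be policies with (π s a = 0 → π' s a = 0) such that D̄_KL(π'‖π) ≤ δ and 𝔸_F(π,π') ≥ 0 (these conditions hold when π' solves the trust-region subproblem maximizing 𝔸_F(π,·) subject to D̄_KL(·‖π) ≤ δ over a class containing π). Then J_F(π') − J_F(π) ≥ − √(2δ) · γ · ε_F(π,π') / (1−γ)². -/

import Mathlib

open Real BigOperators

/-- Induced transition matrix of policy `pol`: `P_pol(s,s') = ∑ a, pol s a * P s a s'`. -/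
noncomputable def transMat {S A : Type*} [Fintype A] (P : S → A → S → ℝ)
    (pol : S → A → ℝ) : Matrix S S ℝ :=
  fun s s' => ∑ a, pol s a * P s a s'

/-- Discounted state visitation distribution
`d_pol(s) = (1-γ) ∑ₜ γ^t ∑_{s0} ρ0 s0 * (P_pol^t)(s0,s)`. -/
noncomputable def dVisit {S A : Type*} [Fintype S] [DecidableEq S] [Fintype A]
    (P : S → A → S → ℝ) (γ : ℝ) (ρ0 : S → ℝ) (pol : S → A → ℝ) (s : S) : ℝ :=
  (1 - γ) * ∑' t : ℕ, γ ^ t * ∑ s0, ρ0 s0 * (transMat P pol ^ t) s0 s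

/-- Value function of signal `F` under policy `pol`. -/
noncomputable def Vfun {S A : Type*} [Fintype S] [DecidableEq S] [Fintype A]
    (P : S → A → S → ℝ) (γ : ℝ) (F : S → A → ℝ) (pol : S → A → ℝ) (s : S) : ℝ :=
  ∑' t : ℕ, γ ^ t * ∑ s', (transMat P pol ^ t) s s' * ∑ a, pol s' a * F s' a

/-- Return `J_F(pol) = ∑ s, ρ0 s * V_F^pol(s)`. -/
noncomputable def Jret {S A : Type*} [Fintype S] [DecidableEq S] [Fintype A]
    (P : S → A → S → ℝ) (γ : ℝ) (ρ0 : S → ℝ) (F : S → A → ℝ) (pol : S → A → ℝ) : ℝ :=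
  ∑ s, ρ0 s * Vfun P γ F pol s

/-- Action-value function `Q_F^pol(s,a) = F s a + γ ∑_{s'} P s a s' * V_F^pol(s')`. -/
noncomputable def Qfun {S A : Type*} [Fintype S] [DecidableEq S] [Fintype A]
    (P : S → A → S → ℝ) (γ : ℝ) (F : S → A → ℝ) (pol : S → A → ℝ) (s : S) (a : A) : ℝ :=
  F s a + γ * ∑ s', P s a s' * Vfun P γ F pol s'

/-- Advantage function `A_F^pol(s,a) = Q_F^pol(s,a) - V_F^pol(s)`. -/
noncomputable def Adv {S A : Type*} [Fintype S] [DecidableEq S] [Fintype A]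
    (P : S → A → S → ℝ) (γ : ℝ) (F : S → A → ℝ) (pol : S → A → ℝ) (s : S) (a : A) : ℝ :=
  Qfun P γ F pol s a - Vfun P γ F pol s

/-- Expected surrogate advantage
`𝔸_F(pol,pol') = ∑ s, d_pol(s) ∑ a, pol' s a * A_F^pol(s,a)`. -/
noncomputable def surrAdv {S A : Type*} [Fintype S] [DecidableEq S] [Fintype A]
    (P : S → A → S → ℝ) (γ : ℝ) (ρ0 : S → ℝ) (F : S → A → ℝ)
    (pol pol' : S → A → ℝ) : ℝ :=
  ∑ s, dVisit P γ ρ0 pol s * ∑ a, pol' s a * Adv P γ F pol s a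

/-- `ε_F(pol,pol') = max_s |∑ a, pol' s a * A_F^pol(s,a)|`. -/
noncomputable def epsAdv {S A : Type*} [Fintype S] [DecidableEq S] [Fintype A] [Nonempty S]
    (P : S → A → S → ℝ) (γ : ℝ) (F : S → A → ℝ) (pol pol' : S → A → ℝ) : ℝ :=
  Finset.univ.sup' Finset.univ_nonempty fun s => |∑ a, pol' s a * Adv P γ F pol s a|

/-- Per-state KL divergence `KL(pol'‖pol)(s) = ∑ a, pol' s a * log (pol' s a / pol s a)`
(with the convention `0 * log 0 = 0`, automatic since `Real.log 0 = 0`). -/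
noncomputable def klState {S A : Type*} [Fintype A] (pol' pol : S → A → ℝ) (s : S) : ℝ :=
  ∑ a, pol' s a * Real.log (pol' s a / pol s a)

/-- Averaged KL divergence `D̄_KL(pol'‖pol) = ∑ s, d_pol(s) * KL(pol'‖pol)(s)`. -/
noncomputable def avgKL {S A : Type*} [Fintype S] [DecidableEq S] [Fintype A]
    (P : S → A → S → ℝ) (γ : ℝ) (ρ0 : S → ℝ) (pol' pol : S → A → ℝ) : ℝ :=
  ∑ s, dVisit P γ ρ0 pol s * klState pol' pol s

set_option linter.unusedSectionVars false
set_option maxHeartbeats 1000000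

namespace TRWC




lemma hasDerivAt_k {x : ℝ} (hx : 0 < x) :
    HasDerivAt (fun y : ℝ => (y + 1) * Real.log y - 2 * (y - 1))
      (Real.log x + 1 / x - 1) x := by
  have h1 : HasDerivAt (fun y : ℝ => (y + 1) * Real.log y)
      (1 * Real.log x + (x + 1) * x⁻¹) x :=
    (((hasDerivAt_id x).add_const 1)).mul (Real.hasDerivAt_log hx.ne')
  have h2 : HasDerivAt (fun y : ℝ => 2 * (y - 1)) 2 x := by
    simpa using ((hasDerivAt_id x).sub_const 1).const_mul 2
  have := h1.sub h2
  refine this.congr_deriv ?_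
  field_simp
  ring

lemma hasDerivAt_h {x : ℝ} (hx : 0 < x) :
    HasDerivAt (fun y : ℝ => 2 * (y + 2) * (y * Real.log y - y + 1) - 3 * (y - 1) ^ 2)
      (4 * ((x + 1) * Real.log x - 2 * (x - 1))) x := by
  have hylog : HasDerivAt (fun y : ℝ => y * Real.log y) (Real.log x + 1) x := by
    have := (hasDerivAt_id x).mul (Real.hasDerivAt_log hx.ne')
    refine this.congr_deriv ?_
    simp only [id_eq]
    field_simp
  have h1 : HasDerivAt (fun y : ℝ => 2 * (y + 2) * (y * Real.log y - y + 1))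
      (2 * (x * Real.log x - x + 1) + 2 * (x + 2) * (Real.log x + 1 - 1)) x := by
    have ha : HasDerivAt (fun y : ℝ => 2 * (y + 2)) 2 x := by
      simpa using ((hasDerivAt_id x).add_const 2).const_mul 2
    have hb : HasDerivAt (fun y : ℝ => y * Real.log y - y + 1) (Real.log x + 1 - 1) x :=
      (hylog.sub (hasDerivAt_id x)).add_const 1
    have := ha.mul hb
    refine this.congr_deriv ?_
    all_goals try simp only [id_eq]
    all_goals ring
  have h2 : HasDerivAt (fun y : ℝ => 3 * (y - 1) ^ 2) (3 * (2 * (x - 1))) x := by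
    have := (((hasDerivAt_id x).sub_const 1).pow 2).const_mul 3
    refine this.congr_deriv ?_
    all_goals try simp only [id_eq]
    all_goals ring
  have := h1.sub h2
  refine this.congr_deriv ?_
  all_goals try simp only [id_eq]
  all_goals ring

lemma k_nonneg {x : ℝ} (hx : 1 ≤ x) : 0 ≤ (x + 1) * Real.log x - 2 * (x - 1) := by
  set k : ℝ → ℝ := fun y => (y + 1) * Real.log y - 2 * (y - 1) with hk
  have hmono : MonotoneOn k (Set.Ici 1) := by
    apply monotoneOn_of_deriv_nonneg (convex_Ici 1)
    · intro y hy
      exact (hasDerivAt_k (lt_of_lt_of_le one_pos hy)).continuousAt.continuousWithinAt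
    · intro y hy
      rw [interior_Ici] at hy
      exact (hasDerivAt_k (lt_trans one_pos hy)).differentiableAt.differentiableWithinAt
    · intro y hy
      rw [interior_Ici] at hy
      rw [(hasDerivAt_k (lt_trans one_pos hy)).deriv]
      have h1 : Real.log y⁻¹ ≤ y⁻¹ - 1 :=
        Real.log_le_sub_one_of_pos (inv_pos.mpr (lt_trans one_pos hy))
      rw [Real.log_inv] at h1
      have : 1 - 1 / y ≤ Real.log y := by
        rw [one_div]; linarith
      linarith
  have := hmono (Set.mem_Ici.mpr le_rfl) (Set.mem_Ici.mpr hx) hx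
  simpa [hk] using this

lemma k_nonpos {x : ℝ} (hx0 : 0 < x) (hx1 : x ≤ 1) :
    (x + 1) * Real.log x - 2 * (x - 1) ≤ 0 := by
  set k : ℝ → ℝ := fun y => (y + 1) * Real.log y - 2 * (y - 1) with hk
  have hmono : MonotoneOn k (Set.Ioc 0 1) := by
    apply monotoneOn_of_deriv_nonneg (convex_Ioc 0 1)
    · intro y hy
      exact (hasDerivAt_k hy.1).continuousAt.continuousWithinAt
    · intro y hy
      rw [interior_Ioc] at hy
      exact (hasDerivAt_k hy.1).differentiableAt.differentiableWithinAt
    · intro y hy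
      rw [interior_Ioc] at hy
      rw [(hasDerivAt_k hy.1).deriv]
      have h1 : Real.log y⁻¹ ≤ y⁻¹ - 1 :=
        Real.log_le_sub_one_of_pos (inv_pos.mpr hy.1)
      rw [Real.log_inv] at h1
      have : 1 - 1 / y ≤ Real.log y := by
        rw [one_div]; linarith
      linarith
  have := hmono (Set.mem_Ioc.mpr ⟨hx0, hx1⟩) (Set.mem_Ioc.mpr ⟨one_pos, le_rfl⟩) hx1
  simpa [hk] using this

lemma h_nonneg {x : ℝ} (hx : 0 ≤ x) :
    0 ≤ 2 * (x + 2) * (x * Real.log x - x + 1) - 3 * (x - 1) ^ 2 := by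
  rcases eq_or_lt_of_le hx with h | hx0
  · rw [← h]; norm_num
  set h : ℝ → ℝ := fun y => 2 * (y + 2) * (y * Real.log y - y + 1) - 3 * (y - 1) ^ 2 with hh
  have h1 : h 1 = 0 := by simp [hh]
  rcases le_total x 1 with hle | hge
  · have hanti : AntitoneOn h (Set.Ioc 0 1) := by
      apply antitoneOn_of_deriv_nonpos (convex_Ioc 0 1)
      · intro y hy
        exact (hasDerivAt_h hy.1).continuousAt.continuousWithinAt
      · intro y hy
        rw [interior_Ioc] at hy
        exact (hasDerivAt_h hy.1).differentiableAt.differentiableWithinAt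
      · intro y hy
        rw [interior_Ioc] at hy
        rw [(hasDerivAt_h hy.1).deriv]
        have := k_nonpos hy.1 hy.2.le
        linarith
    have := hanti (Set.mem_Ioc.mpr ⟨hx0, hle⟩) (Set.mem_Ioc.mpr ⟨one_pos, le_rfl⟩) hle
    rw [h1] at this
    simpa [hh] using this
  · have hmono : MonotoneOn h (Set.Ici 1) := by
      apply monotoneOn_of_deriv_nonneg (convex_Ici 1)
      · intro y hy
        exact (hasDerivAt_h (lt_of_lt_of_le one_pos hy)).continuousAt.continuousWithinAt
      · intro y hy
        rw [interior_Ici] at hy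
        exact (hasDerivAt_h (lt_trans one_pos hy)).differentiableAt.differentiableWithinAt
      · intro y hy
        rw [interior_Ici] at hy
        rw [(hasDerivAt_h (lt_trans one_pos hy)).deriv]
        have := k_nonneg hy.le
        linarith
    have := hmono (Set.mem_Ici.mpr le_rfl) (Set.mem_Ici.mpr hge) hge
    rw [h1] at this
    simpa [hh] using this

lemma pinsker_term {p q : ℝ} (hp : 0 ≤ p) (hq : 0 ≤ q) (h0 : q = 0 → p = 0) :
    3 * (p - q) ^ 2 / (p + 2 * q) ≤ 2 * (p * Real.log (p / q) - p + q) := by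
  rcases eq_or_lt_of_le hq with hq0 | hqpos
  · have hp0 : p = 0 := h0 hq0.symm
    simp [hp0, ← hq0]
  set x : ℝ := p / q with hxdef
  have hx0 : 0 ≤ x := div_nonneg hp hq
  have hpx : p = q * x := by rw [hxdef]; field_simp
  have hsum : 0 < p + 2 * q := by linarith
  rw [div_le_iff₀ hsum]
  have hh := h_nonneg hx0
  set L := Real.log x with hL
  have key : 0 ≤ q ^ 2 * (2 * (x + 2) * (x * L - x + 1) - 3 * (x - 1) ^ 2) :=
    mul_nonneg (sq_nonneg q) hh
  rw [hpx]
  nlinarith [sq_nonneg q, hqpos]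

lemma pinsker_sum {A : Type*} [Fintype A] (p q : A → ℝ)
    (hp0 : ∀ a, 0 ≤ p a) (hq0 : ∀ a, 0 ≤ q a)
    (hp1 : ∑ a, p a = 1) (hq1 : ∑ a, q a = 1)
    (h0 : ∀ a, q a = 0 → p a = 0) :
    (∑ a, |p a - q a|) ^ 2 ≤ 2 * ∑ a, p a * Real.log (p a / q a) := by
  set f : A → ℝ := fun a => Real.sqrt ((p a + 2 * q a) / 3) with hf
  set g : A → ℝ := fun a => Real.sqrt (3 * (p a - q a) ^ 2 / (p a + 2 * q a)) with hg
  have hfg : ∀ a, |p a - q a| = f a * g a := by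
    intro a
    have h1a := hp0 a
    have h2a := hq0 a
    rw [hf, hg, ← Real.sqrt_mul (by positivity)]
    rcases eq_or_lt_of_le (by positivity : (0:ℝ) ≤ p a + 2 * q a) with hz | hz
    · have hpa : p a = 0 := by nlinarith [hp0 a, hq0 a]
      have hqa : q a = 0 := by nlinarith [hp0 a, hq0 a]
      simp [hpa, hqa]
    · have : (p a + 2 * q a) / 3 * (3 * (p a - q a) ^ 2 / (p a + 2 * q a))
          = (p a - q a) ^ 2 := by
        field_simp
      rw [this, Real.sqrt_sq_eq_abs]
  have hCS := Finset.sum_mul_sq_le_sq_mul_sq Finset.univ f g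
  have hsum1 : ∑ a, f a ^ 2 = 1 := by
    have : ∀ a, f a ^ 2 = (p a + 2 * q a) / 3 := by
      intro a
      have h1a := hp0 a
      have h2a := hq0 a
      rw [hf, Real.sq_sqrt (by positivity)]
    rw [Finset.sum_congr rfl (fun a _ => this a)]
    rw [← Finset.sum_div, Finset.sum_add_distrib, hp1, ← Finset.mul_sum, hq1]
    norm_num
  have hsum2 : ∑ a, g a ^ 2 ≤ 2 * ∑ a, p a * Real.log (p a / q a) := by
    have heq : ∀ a, g a ^ 2 = 3 * (p a - q a) ^ 2 / (p a + 2 * q a) := by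
      intro a
      have h1a := hp0 a
      have h2a := hq0 a
      rw [hg, Real.sq_sqrt (by positivity)]
    calc ∑ a, g a ^ 2 = ∑ a, 3 * (p a - q a) ^ 2 / (p a + 2 * q a) :=
          Finset.sum_congr rfl (fun a _ => heq a)
      _ ≤ ∑ a, 2 * (p a * Real.log (p a / q a) - p a + q a) :=
          Finset.sum_le_sum (fun a _ => pinsker_term (hp0 a) (hq0 a) (h0 a))
      _ = 2 * ∑ a, p a * Real.log (p a / q a) := by
          rw [← Finset.mul_sum]
          congr 1
          rw [Finset.sum_add_distrib, Finset.sum_sub_distrib, hp1, hq1]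
          ring
  calc (∑ a, |p a - q a|) ^ 2 = (∑ a, f a * g a) ^ 2 := by
        rw [Finset.sum_congr rfl (fun a _ => hfg a)]
    _ ≤ (∑ a, f a ^ 2) * ∑ a, g a ^ 2 := hCS
    _ = ∑ a, g a ^ 2 := by rw [hsum1, one_mul]
    _ ≤ 2 * ∑ a, p a * Real.log (p a / q a) := hsum2




variable {S A : Type*} [Fintype S] [DecidableEq S] [Fintype A]

lemma summable_aux {γ : ℝ} (h0 : 0 ≤ γ) (h1 : γ < 1) (w : ℕ → ℝ) (C : ℝ)
    (hw : ∀ t, |w t| ≤ C) : Summable (fun t => γ ^ t * w t) := by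
  refine Summable.of_norm_bounded (g := fun t => γ ^ t * C)
    ((summable_geometric_of_lt_one h0 h1).mul_right C) (fun t => ?_)
  rw [Real.norm_eq_abs, abs_mul, abs_of_nonneg (pow_nonneg h0 t)]
  exact mul_le_mul_of_nonneg_left (hw t) (pow_nonneg h0 t)

lemma stoch_pow (M : Matrix S S ℝ) (h0 : ∀ i j, 0 ≤ M i j) (h1 : ∀ i, ∑ j, M i j = 1)
    (t : ℕ) : (∀ i j, 0 ≤ (M ^ t) i j) ∧ ∀ i, ∑ j, (M ^ t) i j = 1 := by
  induction t with
  | zero =>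
      constructor
      · intro i j
        simp only [pow_zero, Matrix.one_apply]
        split <;> norm_num
      · intro i
        simp [Matrix.one_apply]
  | succ t ih =>
      constructor
      · intro i j
        rw [pow_succ, Matrix.mul_apply]
        exact Finset.sum_nonneg fun k _ => mul_nonneg (ih.1 i k) (h0 k j)
      · intro i
        simp only [pow_succ, Matrix.mul_apply]
        rw [Finset.sum_comm]
        calc ∑ k, ∑ j, (M ^ t) i k * M k j = ∑ k, (M ^ t) i k * ∑ j, M k j := by
              simp [Finset.mul_sum]
          _ = 1 := by simp [h1, ih.2 i]

lemma pow_entry_le_one (M : Matrix S S ℝ) (h0 : ∀ i j, 0 ≤ M i j)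
    (h1 : ∀ i, ∑ j, M i j = 1) (t : ℕ) (i j : S) : (M ^ t) i j ≤ 1 := by
  have := (stoch_pow M h0 h1 t).2 i
  calc (M ^ t) i j ≤ ∑ j', (M ^ t) i j' :=
        Finset.single_le_sum (fun k _ => (stoch_pow M h0 h1 t).1 i k) (Finset.mem_univ j)
    _ = 1 := this

section Kernel

variable (P : S → A → S → ℝ) (γ : ℝ) (ρ0 : S → ℝ) (pol : S → A → ℝ)

lemma transMat_nonneg (hP0 : ∀ s a s', 0 ≤ P s a s') (hpol0 : ∀ s a, 0 ≤ pol s a) :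
    ∀ s s', 0 ≤ transMat P pol s s' := fun s s' =>
  Finset.sum_nonneg fun a _ => mul_nonneg (hpol0 s a) (hP0 s a s')

lemma transMat_rowsum (hP1 : ∀ s a, ∑ s', P s a s' = 1) (hpol1 : ∀ s, ∑ a, pol s a = 1) :
    ∀ s, ∑ s', transMat P pol s s' = 1 := by
  intro s
  unfold transMat
  rw [Finset.sum_comm]
  calc ∑ a, ∑ s', pol s a * P s a s' = ∑ a, pol s a * ∑ s', P s a s' := by
        simp [Finset.mul_sum]
    _ = 1 := by simp [hP1, hpol1 s]

variable (hP0 : ∀ s a s', 0 ≤ P s a s') (hP1 : ∀ s a, ∑ s', P s a s' = 1)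
  (hγ0 : 0 < γ) (hγ1 : γ < 1)
  (hρ0 : ∀ s, 0 ≤ ρ0 s) (hρ1 : ∑ s, ρ0 s = 1)
  (hpol0 : ∀ s a, 0 ≤ pol s a) (hpol1 : ∀ s, ∑ a, pol s a = 1)

include hP0 hP1 hγ0 hγ1 hρ0 hρ1 hpol0 hpol1

lemma u_bound : ∀ (t : ℕ) (s : S),
    |∑ s0, ρ0 s0 * (transMat P pol ^ t) s0 s| ≤ 1 := by
  intro t s
  have hM0 := transMat_nonneg P pol hP0 hpol0
  have hM1 := transMat_rowsum P pol hP1 hpol1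
  have h1 : 0 ≤ ∑ s0, ρ0 s0 * (transMat P pol ^ t) s0 s :=
    Finset.sum_nonneg fun s0 _ => mul_nonneg (hρ0 s0) ((stoch_pow _ hM0 hM1 t).1 s0 s)
  rw [abs_of_nonneg h1]
  calc ∑ s0, ρ0 s0 * (transMat P pol ^ t) s0 s ≤ ∑ s0, ρ0 s0 * 1 :=
        Finset.sum_le_sum fun s0 _ =>
          mul_le_mul_of_nonneg_left (pow_entry_le_one _ hM0 hM1 t s0 s) (hρ0 s0)
    _ = 1 := by simp [hρ1]

lemma u_summable : ∀ s : S,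
    Summable (fun t => γ ^ t * ∑ s0, ρ0 s0 * (transMat P pol ^ t) s0 s) := fun s =>
  summable_aux hγ0.le hγ1 _ 1 (fun t => u_bound P γ ρ0 pol hP0 hP1 hγ0 hγ1 hρ0 hρ1 hpol0 hpol1 t s)

lemma dVisit_fix (s : S) :
    dVisit P γ ρ0 pol s =
      (1 - γ) * ρ0 s + γ * ∑ s0, dVisit P γ ρ0 pol s0 * transMat P pol s0 s := by
  set M := transMat P pol with hM
  set u : ℕ → S → ℝ := fun t s' => ∑ s0, ρ0 s0 * (M ^ t) s0 s' with hu
  have hsum : ∀ s' : S, Summable (fun t => γ ^ t * u t s') :=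
    u_summable P γ ρ0 pol hP0 hP1 hγ0 hγ1 hρ0 hρ1 hpol0 hpol1
  have hu0 : u 0 s = ρ0 s := by
    simp [hu, Matrix.one_apply]
  have hstep : ∀ t, u (t + 1) s = ∑ s0, u t s0 * M s0 s := by
    intro t
    simp only [hu, pow_succ, Matrix.mul_apply, Finset.mul_sum, Finset.sum_mul]
    rw [Finset.sum_comm]
    exact Finset.sum_congr rfl fun s1 _ => Finset.sum_congr rfl fun s0 _ => by ring
  have hshift : ∑' t : ℕ, γ ^ (t + 1) * u (t + 1) s
      = γ * ∑ s0, (∑' t : ℕ, γ ^ t * u t s0) * M s0 s := by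
    calc ∑' t : ℕ, γ ^ (t + 1) * u (t + 1) s
        = ∑' t : ℕ, ∑ s0, γ * ((γ ^ t * u t s0) * M s0 s) := by
          refine tsum_congr fun t => ?_
          rw [hstep t, Finset.mul_sum]
          exact Finset.sum_congr rfl fun s0 _ => by ring
      _ = ∑ s0, ∑' t : ℕ, γ * ((γ ^ t * u t s0) * M s0 s) := by
          refine Summable.tsum_finsetSum fun s0 _ => ?_
          exact ((hsum s0).mul_right (M s0 s)).mul_left γ
      _ = γ * ∑ s0, (∑' t : ℕ, γ ^ t * u t s0) * M s0 s := by
          rw [Finset.mul_sum]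
          exact Finset.sum_congr rfl fun s0 _ => by
            rw [tsum_mul_left, tsum_mul_right]
  have hdv : ∀ s' : S, dVisit P γ ρ0 pol s' = (1 - γ) * ∑' t : ℕ, γ ^ t * u t s' :=
    fun s' => rfl
  rw [hdv s, Summable.tsum_eq_zero_add (hsum s)]
  simp only [pow_zero, one_mul, hu0]
  rw [hshift, mul_add]
  congr 1
  rw [Finset.mul_sum, Finset.mul_sum]
  rw [Finset.mul_sum]
  refine Finset.sum_congr rfl fun s0 _ => ?_
  rw [hdv s0]
  ring

lemma dVisit_nonneg (s : S) : 0 ≤ dVisit P γ ρ0 pol s := by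
  have hM0 := transMat_nonneg P pol hP0 hpol0
  have hM1 := transMat_rowsum P pol hP1 hpol1
  refine mul_nonneg (by linarith) (tsum_nonneg fun t => ?_)
  exact mul_nonneg (pow_nonneg hγ0.le t)
    (Finset.sum_nonneg fun s0 _ => mul_nonneg (hρ0 s0) ((stoch_pow _ hM0 hM1 t).1 s0 s))

lemma dVisit_sum_one : ∑ s, dVisit P γ ρ0 pol s = 1 := by
  set M := transMat P pol with hM
  have hM0 := transMat_nonneg P pol hP0 hpol0
  have hM1 := transMat_rowsum P pol hP1 hpol1
  have hsum : ∀ s' : S, Summable (fun t => γ ^ t * ∑ s0, ρ0 s0 * (M ^ t) s0 s') :=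
    u_summable P γ ρ0 pol hP0 hP1 hγ0 hγ1 hρ0 hρ1 hpol0 hpol1
  unfold dVisit
  rw [← Finset.mul_sum, ← Summable.tsum_finsetSum (fun s _ => hsum s)]
  have : ∀ t : ℕ, ∑ s, γ ^ t * ∑ s0, ρ0 s0 * (M ^ t) s0 s = γ ^ t := by
    intro t
    rw [← Finset.mul_sum, Finset.sum_comm]
    have : ∑ s0, ∑ s, ρ0 s0 * (M ^ t) s0 s = 1 := by
      calc ∑ s0, ∑ s, ρ0 s0 * (M ^ t) s0 s = ∑ s0, ρ0 s0 * ∑ s, (M ^ t) s0 s := by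
            simp [Finset.mul_sum]
        _ = 1 := by simp [fun s0 => (stoch_pow M hM0 hM1 t).2 s0, hρ1]
    rw [this, mul_one]
  rw [tsum_congr this, tsum_geometric_of_lt_one hγ0.le hγ1]
  rw [mul_inv_cancel₀ (by linarith : (1:ℝ) - γ ≠ 0)]

end Kernel






section Kernel

variable (P : S → A → S → ℝ) (γ : ℝ) (ρ0 : S → ℝ) (pol : S → A → ℝ)

variable (hP0 : ∀ s a s', 0 ≤ P s a s') (hP1 : ∀ s a, ∑ s', P s a s' = 1)
  (hγ0 : 0 < γ) (hγ1 : γ < 1)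
  (hρ0 : ∀ s, 0 ≤ ρ0 s) (hρ1 : ∑ s, ρ0 s = 1)
  (hpol0 : ∀ s a, 0 ≤ pol s a) (hpol1 : ∀ s, ∑ a, pol s a = 1)

include hP0 hP1 hγ0 hγ1 hρ0 hρ1 hpol0 hpol1

lemma vterm_summable (F : S → A → ℝ) (s0 : S) :
    Summable (fun t => γ ^ t * ∑ s', (transMat P pol ^ t) s0 s' *
      ∑ a, pol s' a * F s' a) := by
  have hM0 := transMat_nonneg P pol hP0 hpol0
  have hM1 := transMat_rowsum P pol hP1 hpol1
  set M := transMat P pol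
  set r : S → ℝ := fun s' => ∑ a, pol s' a * F s' a with hr
  refine summable_aux hγ0.le hγ1 _ (∑ s', |r s'|) (fun t => ?_)
  calc |∑ s', (M ^ t) s0 s' * r s'| ≤ ∑ s', |(M ^ t) s0 s' * r s'| :=
        Finset.abs_sum_le_sum_abs _ _
    _ ≤ ∑ s', |r s'| := by
        refine Finset.sum_le_sum fun s' _ => ?_
        rw [abs_mul, abs_of_nonneg ((stoch_pow M hM0 hM1 t).1 s0 s')]
        exact mul_le_of_le_one_left (abs_nonneg _) (pow_entry_le_one M hM0 hM1 t s0 s')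

lemma dVisit_J (F : S → A → ℝ) :
    ∑ s, dVisit P γ ρ0 pol s * (∑ a, pol s a * F s a)
      = (1 - γ) * Jret P γ ρ0 F pol := by
  have hM0 := transMat_nonneg P pol hP0 hpol0
  have hM1 := transMat_rowsum P pol hP1 hpol1
  set M := transMat P pol with hM
  set r : S → ℝ := fun s' => ∑ a, pol s' a * F s' a with hr
  set u : ℕ → S → ℝ := fun t s' => ∑ s0, ρ0 s0 * (M ^ t) s0 s' with hu
  have husum : ∀ s' : S, Summable (fun t => γ ^ t * u t s') :=
    u_summable P γ ρ0 pol hP0 hP1 hγ0 hγ1 hρ0 hρ1 hpol0 hpol1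
  have hwsum : ∀ s0 : S, Summable (fun t => γ ^ t * ∑ s', (M ^ t) s0 s' * r s') :=
    vterm_summable P γ ρ0 pol hP0 hP1 hγ0 hγ1 hρ0 hρ1 hpol0 hpol1 F
  calc ∑ s, dVisit P γ ρ0 pol s * r s
      = (1 - γ) * ∑ s, ∑' t : ℕ, (γ ^ t * u t s) * r s := by
        rw [Finset.mul_sum]
        refine Finset.sum_congr rfl fun s _ => ?_
        show (1 - γ) * (∑' t : ℕ, γ ^ t * u t s) * r s = _
        rw [tsum_mul_right]
        ring
    _ = (1 - γ) * ∑' t : ℕ, ∑ s, (γ ^ t * u t s) * r s := by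
        congr 1
        refine (Summable.tsum_finsetSum fun s _ => ?_).symm
        exact (husum s).mul_right (r s)
    _ = (1 - γ) * ∑' t : ℕ, ∑ s0, ρ0 s0 * (γ ^ t * ∑ s', (M ^ t) s0 s' * r s') := by
        congr 1
        refine tsum_congr fun t => ?_
        simp only [hu, Finset.sum_mul, Finset.mul_sum]
        rw [Finset.sum_comm]
        exact Finset.sum_congr rfl fun s0 _ => Finset.sum_congr rfl fun s' _ => by ring
    _ = (1 - γ) * Jret P γ ρ0 F pol := by
        congr 1
        refine Eq.symm ?_
        show ∑ s0, ρ0 s0 * Vfun P γ F pol s0 = _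
        calc ∑ s0, ρ0 s0 * Vfun P γ F pol s0
            = ∑ s0, ∑' t : ℕ, ρ0 s0 * (γ ^ t * ∑ s', (M ^ t) s0 s' * r s') := by
              refine Finset.sum_congr rfl fun s0 _ => ?_
              show ρ0 s0 * (∑' t : ℕ, γ ^ t * ∑ s', (M ^ t) s0 s' * r s')
                = ∑' t : ℕ, ρ0 s0 * (γ ^ t * ∑ s', (M ^ t) s0 s' * r s')
              exact (tsum_mul_left).symm
          _ = ∑' t : ℕ, ∑ s0, ρ0 s0 * (γ ^ t * ∑ s', (M ^ t) s0 s' * r s') := by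
              refine (Summable.tsum_finsetSum fun s0 _ => ?_).symm
              exact (hwsum s0).mul_left (ρ0 s0)

end Kernel

lemma perf_diff (P : S → A → S → ℝ) (hP0 : ∀ s a s', 0 ≤ P s a s')
    (hP1 : ∀ s a, ∑ s', P s a s' = 1)
    {γ : ℝ} (hγ0 : 0 < γ) (hγ1 : γ < 1)
    (ρ0 : S → ℝ) (hρ0 : ∀ s, 0 ≤ ρ0 s) (hρ1 : ∑ s, ρ0 s = 1)
    (F : S → A → ℝ)
    (pol : S → A → ℝ) (hpol0 : ∀ s a, 0 ≤ pol s a) (hpol1 : ∀ s, ∑ a, pol s a = 1)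
    (pol' : S → A → ℝ) (hpol'0 : ∀ s a, 0 ≤ pol' s a) (hpol'1 : ∀ s, ∑ a, pol' s a = 1) :
    ∑ s, dVisit P γ ρ0 pol' s * (∑ a, pol' s a * Adv P γ F pol s a)
      = (1 - γ) * (Jret P γ ρ0 F pol' - Jret P γ ρ0 F pol) := by
  set M' := transMat P pol' with hM'
  set V := Vfun P γ F pol with hV
  set d' := dVisit P γ ρ0 pol' with hd'
  set r' : S → ℝ := fun s => ∑ a, pol' s a * F s a with hr'
  have hmixer : ∀ s, ∑ a, pol' s a * ∑ s', P s a s' * V s' = ∑ s', M' s s' * V s' := by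
    intro s
    simp only [Finset.mul_sum]
    rw [Finset.sum_comm]
    refine Finset.sum_congr rfl fun s' _ => ?_
    show ∑ a, pol' s a * (P s a s' * V s') = (∑ a, pol' s a * P s a s') * V s'
    rw [Finset.sum_mul]
    exact Finset.sum_congr rfl fun a _ => by ring
  have hf : ∀ s, (∑ a, pol' s a * Adv P γ F pol s a)
      = r' s + γ * (∑ s', M' s s' * V s') - V s := by
    intro s
    unfold Adv Qfun
    have h1 : ∀ a : A, pol' s a * (F s a + γ * ∑ s', P s a s' * V s' - V s)
        = pol' s a * F s a + γ * (pol' s a * ∑ s', P s a s' * V s')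
          - pol' s a * V s := fun a => by ring
    rw [Finset.sum_congr rfl fun a _ => h1 a, Finset.sum_sub_distrib,
      Finset.sum_add_distrib, ← Finset.mul_sum, ← Finset.sum_mul, hpol'1, one_mul,
      hmixer s]
  have hmid : γ * ∑ s, ∑ s', d' s * (M' s s' * V s')
      = ∑ s, d' s * V s - (1 - γ) * Jret P γ ρ0 F pol := by
    have hfix := dVisit_fix P γ ρ0 pol' hP0 hP1 hγ0 hγ1 hρ0 hρ1 hpol'0 hpol'1
    calc γ * ∑ s, ∑ s', d' s * (M' s s' * V s')
        = ∑ s', (γ * ∑ s, d' s * M' s s') * V s' := by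
          rw [Finset.sum_comm, Finset.mul_sum]
          refine Finset.sum_congr rfl fun s' _ => ?_
          simp only [Finset.sum_mul, Finset.mul_sum]
          exact Finset.sum_congr rfl fun s _ => by ring
      _ = ∑ s', (d' s' - (1 - γ) * ρ0 s') * V s' := by
          refine Finset.sum_congr rfl fun s' _ => ?_
          have h2 : γ * ∑ s, d' s * M' s s' = d' s' - (1 - γ) * ρ0 s' := by
            show γ * ∑ s, dVisit P γ ρ0 pol' s * transMat P pol' s s'
              = dVisit P γ ρ0 pol' s' - (1 - γ) * ρ0 s'
            linarith [hfix s']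
          rw [h2]
      _ = ∑ s, d' s * V s - (1 - γ) * Jret P γ ρ0 F pol := by
          rw [Finset.sum_congr rfl fun s' (_ : s' ∈ Finset.univ) => sub_mul (d' s') _ (V s'),
            Finset.sum_sub_distrib]
          congr 1
          unfold Jret
          rw [Finset.mul_sum]
          exact Finset.sum_congr rfl fun s _ => by rw [hV]; ring
  have hJ' : ∑ s, d' s * r' s = (1 - γ) * Jret P γ ρ0 F pol' :=
    dVisit_J P γ ρ0 pol' hP0 hP1 hγ0 hγ1 hρ0 hρ1 hpol'0 hpol'1 F
  calc ∑ s, d' s * (∑ a, pol' s a * Adv P γ F pol s a)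
      = ∑ s, (d' s * r' s + γ * ∑ s', d' s * (M' s s' * V s') - d' s * V s) := by
        refine Finset.sum_congr rfl fun s _ => ?_
        rw [hf s,
          show ∑ s', d' s * (M' s s' * V s') = d' s * ∑ s', M' s s' * V s' from
            (Finset.mul_sum _ _ _).symm]
        ring
    _ = ∑ s, d' s * r' s + γ * ∑ s, ∑ s', d' s * (M' s s' * V s') - ∑ s, d' s * V s := by
        rw [Finset.sum_sub_distrib, Finset.sum_add_distrib, ← Finset.mul_sum]
    _ = (1 - γ) * (Jret P γ ρ0 F pol' - Jret P γ ρ0 F pol) := by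
        rw [hJ', hmid]
        ring


end TRWC

/-- trust-region worst-case update bound (Lemma A.1, operational form). -/
theorem trust_region_worst_case {S A : Type*} [Fintype S] [DecidableEq S] [Fintype A] [Nonempty S] [Nonempty A]
    (P : S → A → S → ℝ) (hP0 : ∀ s a s', 0 ≤ P s a s') (hP1 : ∀ s a, ∑ s', P s a s' = 1)
    (γ : ℝ) (hγ0 : 0 < γ) (hγ1 : γ < 1)
    (ρ0 : S → ℝ) (hρ0 : ∀ s, 0 ≤ ρ0 s) (hρ1 : ∑ s, ρ0 s = 1)
    (δ : ℝ) (hδ : 0 < δ) (F : S → A → ℝ)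
    (pol : S → A → ℝ) (hpol0 : ∀ s a, 0 ≤ pol s a) (hpol1 : ∀ s, ∑ a, pol s a = 1) (pol' : S → A → ℝ) (hpol'0 : ∀ s a, 0 ≤ pol' s a) (hpol'1 : ∀ s, ∑ a, pol' s a = 1)
    (habs : ∀ s a, pol s a = 0 → pol' s a = 0)
    (hKL : avgKL P γ ρ0 pol' pol ≤ δ)
    (hA : 0 ≤ surrAdv P γ ρ0 F pol pol') :
    Jret P γ ρ0 F pol' - Jret P γ ρ0 F pol ≥
      - (Real.sqrt (2 * δ) * γ * epsAdv P γ F pol pol' / (1 - γ) ^ 2) := by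
  classical
  have h1g : (0:ℝ) < 1 - γ := by linarith
  have hfix := fun s => TRWC.dVisit_fix P γ ρ0 pol hP0 hP1 hγ0 hγ1 hρ0 hρ1 hpol0 hpol1 s
  have hfix' := fun s => TRWC.dVisit_fix P γ ρ0 pol' hP0 hP1 hγ0 hγ1 hρ0 hρ1 hpol'0 hpol'1 s
  have hd0 : ∀ s, 0 ≤ dVisit P γ ρ0 pol s :=
    fun s => TRWC.dVisit_nonneg P γ ρ0 pol hP0 hP1 hγ0 hγ1 hρ0 hρ1 hpol0 hpol1 s
  have hd'0 : ∀ s, 0 ≤ dVisit P γ ρ0 pol' s :=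
    fun s => TRWC.dVisit_nonneg P γ ρ0 pol' hP0 hP1 hγ0 hγ1 hρ0 hρ1 hpol'0 hpol'1 s
  have hd1 : ∑ s, dVisit P γ ρ0 pol s = 1 :=
    TRWC.dVisit_sum_one P γ ρ0 pol hP0 hP1 hγ0 hγ1 hρ0 hρ1 hpol0 hpol1
  have hPD : ∑ s, dVisit P γ ρ0 pol' s * (∑ a, pol' s a * Adv P γ F pol s a)
      = (1 - γ) * (Jret P γ ρ0 F pol' - Jret P γ ρ0 F pol) :=
    TRWC.perf_diff P hP0 hP1 hγ0 hγ1 ρ0 hρ0 hρ1 F pol hpol0 hpol1 pol' hpol'0 hpol'1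
  have hfε : ∀ s, |∑ a, pol' s a * Adv P γ F pol s a| ≤ epsAdv P γ F pol pol' := by
    intro s
    unfold epsAdv
    exact Finset.le_sup' (fun s => |∑ a, pol' s a * Adv P γ F pol s a|) (Finset.mem_univ s)
  have hM'0 := TRWC.transMat_nonneg P pol' hP0 hpol'0
  have hM'1 := TRWC.transMat_rowsum P pol' hP1 hpol'1
  set d : S → ℝ := dVisit P γ ρ0 pol with hd
  set d' : S → ℝ := dVisit P γ ρ0 pol' with hd'
  set ε : ℝ := epsAdv P γ F pol pol' with hεdef
  have hε0 : 0 ≤ ε := le_trans (abs_nonneg _) (hfε (Classical.arbitrary S))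
  set tv : S → ℝ := fun s => ∑ a, |pol' s a - pol s a| with htv
  set T : ℝ := ∑ s, |d' s - d s| with hT
  set W : ℝ := ∑ s, d s * tv s with hWdef
  have htv0 : ∀ s, 0 ≤ tv s := fun s => Finset.sum_nonneg fun a _ => abs_nonneg _
  have hW0 : 0 ≤ W := Finset.sum_nonneg fun s _ => mul_nonneg (hd0 s) (htv0 s)
  have hT0 : 0 ≤ T := Finset.sum_nonneg fun s _ => abs_nonneg _
  -- pointwise bound on the visitation difference
  have hpoint : ∀ s, |d' s - d s| ≤ γ * ∑ s0, (|d' s0 - d s0| * transMat P pol' s0 s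
      + d s0 * ∑ a, |pol' s0 a - pol s0 a| * P s0 a s) := by
    intro s
    have heq : d' s - d s = γ * ∑ s0, ((d' s0 - d s0) * transMat P pol' s0 s
        + d s0 * (transMat P pol' s0 s - transMat P pol s0 s)) := by
      rw [hfix' s, hfix s]
      have : ∑ s0, ((d' s0 - d s0) * transMat P pol' s0 s
            + d s0 * (transMat P pol' s0 s - transMat P pol s0 s))
          = ∑ s0, d' s0 * transMat P pol' s0 s - ∑ s0, d s0 * transMat P pol s0 s := by
        rw [← Finset.sum_sub_distrib]
        exact Finset.sum_congr rfl fun s0 _ => by ring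
      rw [this]
      ring
    have hMdiff : ∀ s0, |transMat P pol' s0 s - transMat P pol s0 s|
        ≤ ∑ a, |pol' s0 a - pol s0 a| * P s0 a s := by
      intro s0
      have : transMat P pol' s0 s - transMat P pol s0 s
          = ∑ a, (pol' s0 a - pol s0 a) * P s0 a s := by
        unfold transMat
        rw [← Finset.sum_sub_distrib]
        exact Finset.sum_congr rfl fun a _ => by ring
      rw [this]
      calc |∑ a, (pol' s0 a - pol s0 a) * P s0 a s|
          ≤ ∑ a, |(pol' s0 a - pol s0 a) * P s0 a s| := Finset.abs_sum_le_sum_abs _ _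
        _ = ∑ a, |pol' s0 a - pol s0 a| * P s0 a s := by
            refine Finset.sum_congr rfl fun a _ => ?_
            rw [abs_mul, abs_of_nonneg (hP0 s0 a s)]
    calc |d' s - d s|
        = γ * |∑ s0, ((d' s0 - d s0) * transMat P pol' s0 s
            + d s0 * (transMat P pol' s0 s - transMat P pol s0 s))| := by
          rw [heq, abs_mul, abs_of_nonneg hγ0.le]
      _ ≤ γ * ∑ s0, |(d' s0 - d s0) * transMat P pol' s0 s
            + d s0 * (transMat P pol' s0 s - transMat P pol s0 s)| :=
          mul_le_mul_of_nonneg_left (Finset.abs_sum_le_sum_abs _ _) hγ0.le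
      _ ≤ γ * ∑ s0, (|d' s0 - d s0| * transMat P pol' s0 s
            + d s0 * ∑ a, |pol' s0 a - pol s0 a| * P s0 a s) := by
          refine mul_le_mul_of_nonneg_left (Finset.sum_le_sum fun s0 _ => ?_) hγ0.le
          calc |(d' s0 - d s0) * transMat P pol' s0 s
                + d s0 * (transMat P pol' s0 s - transMat P pol s0 s)|
              ≤ |(d' s0 - d s0) * transMat P pol' s0 s|
                + |d s0 * (transMat P pol' s0 s - transMat P pol s0 s)| := abs_add_le _ _
            _ ≤ |d' s0 - d s0| * transMat P pol' s0 s
                + d s0 * ∑ a, |pol' s0 a - pol s0 a| * P s0 a s := by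
                have e1 : |(d' s0 - d s0) * transMat P pol' s0 s|
                    = |d' s0 - d s0| * transMat P pol' s0 s := by
                  rw [abs_mul, abs_of_nonneg (hM'0 s0 s)]
                have e2 : |d s0 * (transMat P pol' s0 s - transMat P pol s0 s)|
                    ≤ d s0 * ∑ a, |pol' s0 a - pol s0 a| * P s0 a s := by
                  rw [abs_mul, abs_of_nonneg (hd0 s0)]
                  exact mul_le_mul_of_nonneg_left (hMdiff s0) (hd0 s0)
                linarith
  have hTbound : (1 - γ) * T ≤ γ * W := by
    have hsumpoint : T ≤ γ * (T + W) := by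
      calc T ≤ ∑ s, γ * ∑ s0, (|d' s0 - d s0| * transMat P pol' s0 s
            + d s0 * ∑ a, |pol' s0 a - pol s0 a| * P s0 a s) :=
            Finset.sum_le_sum fun s _ => hpoint s
        _ = γ * ∑ s, ∑ s0, (|d' s0 - d s0| * transMat P pol' s0 s
            + d s0 * ∑ a, |pol' s0 a - pol s0 a| * P s0 a s) := (Finset.mul_sum _ _ _).symm
        _ = γ * (T + W) := by
          congr 1
          rw [Finset.sum_comm]
          calc ∑ s0, ∑ s, (|d' s0 - d s0| * transMat P pol' s0 s
                + d s0 * ∑ a, |pol' s0 a - pol s0 a| * P s0 a s)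
              = ∑ s0, (|d' s0 - d s0| + d s0 * tv s0) := by
                refine Finset.sum_congr rfl fun s0 _ => ?_
                have e1 : ∑ s, transMat P pol' s0 s = 1 := hM'1 s0
                have e2 : ∑ s, ∑ a, |pol' s0 a - pol s0 a| * P s0 a s = tv s0 := by
                  rw [Finset.sum_comm]
                  refine Finset.sum_congr rfl fun a _ => ?_
                  rw [← Finset.mul_sum, hP1 s0 a, mul_one]
                rw [Finset.sum_add_distrib, ← Finset.mul_sum, ← Finset.mul_sum, e1, e2,
                  mul_one]
            _ = T + W := by rw [Finset.sum_add_distrib]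
    nlinarith [hsumpoint]
  -- Pinsker and Cauchy–Schwarz
  have hpinsker : ∀ s, (tv s) ^ 2 ≤ 2 * klState pol' pol s := by
    intro s
    exact TRWC.pinsker_sum (fun a => pol' s a) (fun a => pol s a)
      (hpol'0 s) (hpol0 s) (hpol'1 s) (hpol1 s) (habs s)
  have hW2 : W ^ 2 ≤ 2 * δ := by
    have hCS := Finset.sum_mul_sq_le_sq_mul_sq Finset.univ (fun s => Real.sqrt (d s))
      (fun s => Real.sqrt (d s) * tv s)
    have h1 : ∑ s, Real.sqrt (d s) * (Real.sqrt (d s) * tv s) = W :=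
      Finset.sum_congr rfl fun s _ => by rw [← mul_assoc, Real.mul_self_sqrt (hd0 s)]
    have h2 : ∑ s, (Real.sqrt (d s)) ^ 2 = 1 := by
      rw [Finset.sum_congr rfl fun s (_ : s ∈ Finset.univ) => Real.sq_sqrt (hd0 s), hd1]
    have havg : ∑ s, d s * klState pol' pol s = avgKL P γ ρ0 pol' pol := rfl
    have h3 : ∑ s, (Real.sqrt (d s) * tv s) ^ 2 ≤ 2 * δ := by
      calc ∑ s, (Real.sqrt (d s) * tv s) ^ 2 = ∑ s, d s * (tv s) ^ 2 := by
            refine Finset.sum_congr rfl fun s _ => ?_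
            rw [mul_pow, Real.sq_sqrt (hd0 s)]
        _ ≤ ∑ s, d s * (2 * klState pol' pol s) :=
            Finset.sum_le_sum fun s _ => mul_le_mul_of_nonneg_left (hpinsker s) (hd0 s)
        _ = 2 * ∑ s, d s * klState pol' pol s := by
            rw [Finset.mul_sum]
            exact Finset.sum_congr rfl fun s _ => by ring
        _ ≤ 2 * δ := by rw [havg]; linarith
    calc W ^ 2 = (∑ s, Real.sqrt (d s) * (Real.sqrt (d s) * tv s)) ^ 2 := by rw [h1]
      _ ≤ (∑ s, (Real.sqrt (d s)) ^ 2) * ∑ s, (Real.sqrt (d s) * tv s) ^ 2 := hCS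
      _ ≤ 2 * δ := by rw [h2, one_mul]; exact h3
  have hWs : W ≤ Real.sqrt (2 * δ) := (Real.le_sqrt hW0 (by linarith)).mpr hW2
  -- combine
  have hsub : ∑ s, (d' s - d s) * (∑ a, pol' s a * Adv P γ F pol s a)
      = ∑ s, d' s * (∑ a, pol' s a * Adv P γ F pol s a)
        - ∑ s, d s * (∑ a, pol' s a * Adv P γ F pol s a) := by
    rw [← Finset.sum_sub_distrib]
    exact Finset.sum_congr rfl fun s _ => by ring
  have hsurr : surrAdv P γ ρ0 F pol pol'
      = ∑ s, d s * (∑ a, pol' s a * Adv P γ F pol s a) := rfl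
  have hXlow : -(T * ε) ≤ ∑ s, (d' s - d s) * (∑ a, pol' s a * Adv P γ F pol s a) := by
    have hterm : ∀ s, -(|d' s - d s| * ε)
        ≤ (d' s - d s) * (∑ a, pol' s a * Adv P γ F pol s a) := by
      intro s
      have h1 : |(d' s - d s) * (∑ a, pol' s a * Adv P γ F pol s a)|
          ≤ |d' s - d s| * ε := by
        rw [abs_mul]
        exact mul_le_mul_of_nonneg_left (hfε s) (abs_nonneg _)
      have h2 := neg_abs_le ((d' s - d s) * (∑ a, pol' s a * Adv P γ F pol s a))
      linarith
    calc -(T * ε) = ∑ s, -(|d' s - d s| * ε) := by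
          show -((∑ s, |d' s - d s|) * ε) = ∑ s, -(|d' s - d s| * ε)
          rw [Finset.sum_mul, ← Finset.sum_neg_distrib]
      _ ≤ _ := Finset.sum_le_sum fun s _ => hterm s
  have hmain : -(T * ε) ≤ (1 - γ) * (Jret P γ ρ0 F pol' - Jret P γ ρ0 F pol) := by
    have hkey : (1 - γ) * (Jret P γ ρ0 F pol' - Jret P γ ρ0 F pol)
        = surrAdv P γ ρ0 F pol pol'
          + ∑ s, (d' s - d s) * (∑ a, pol' s a * Adv P γ F pol s a) := by
      rw [← hPD, hsurr, hsub]
      ring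
    linarith [hXlow, hA]
  have hTe : T * ε * (1 - γ) ≤ Real.sqrt (2 * δ) * γ * ε := by
    have h4 : (1 - γ) * T * ε ≤ (γ * Real.sqrt (2 * δ)) * ε := by
      refine mul_le_mul_of_nonneg_right ?_ hε0
      calc (1 - γ) * T ≤ γ * W := hTbound
        _ ≤ γ * Real.sqrt (2 * δ) := mul_le_mul_of_nonneg_left hWs hγ0.le
    nlinarith [h4]
  rw [ge_iff_le, ← neg_div, div_le_iff₀ (by positivity : (0:ℝ) < (1 - γ) ^ 2)]
  have h5 := mul_le_mul_of_nonneg_right hmain h1g.le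
  nlinarith [h5, hTe]
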